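/- Let ρ, σ be density matrices on ℂ^d with spectral decompositions ρ = ∑_x λ_x P_x and σ = ∑_y μ_y Q_y as above, and L > 0. Define T_L as the orthogonal projection onto the support of ∑_{x,y : λ_x ≥ L μ_y} Q_y P_x Q_y. Then Tr(T_L ρ) ≥ ∑_{x,y : λ_x ≥ L μ_y} λ_x Tr(P_x Q_y). -/

import Mathlib

open Matrix
open scoped ComplexOrder

private lemma myext {d : ℕ} {M N : Matrix (Fin d) (Fin d) ℂ}
    (h : ∀ v, M *ᵥ v = N *ᵥ v) : M = N := by
  ext i j
  have := congrFun (h (Pi.single j 1)) i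
  simpa using this

private lemma trace_psd_nonneg {d : ℕ} {M : Matrix (Fin d) (Fin d) ℂ}
    (hM : M.PosSemidef) : 0 ≤ M.trace := by
  rw [Matrix.trace]
  refine Finset.sum_nonneg fun i _ => ?_
  exact hM.diag_nonneg

open scoped MatrixOrder in
private lemma trace_mul_psd_nonneg {d : ℕ} {M N : Matrix (Fin d) (Fin d) ℂ}
    (hM : M.PosSemidef) (hN : N.PosSemidef) : 0 ≤ (M * N).trace := by
  have hs : CFC.sqrt M * CFC.sqrt M = M := CFC.sqrt_mul_sqrt_self M hM.nonneg
  have h1 : (M * N).trace = (CFC.sqrt M * N * CFC.sqrt M).trace := by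
    rw [Matrix.trace_mul_cycle (CFC.sqrt M) N (CFC.sqrt M), hs]
  rw [h1]
  refine trace_psd_nonneg ?_
  have := hN.mul_mul_conjTranspose_same (CFC.sqrt M)
  rwa [(CFC.sqrt_nonneg M).posSemidef.isHermitian.eq] at this

private lemma smul_psd {d : ℕ} {c : ℝ} (hc : 0 ≤ c) {M : Matrix (Fin d) (Fin d) ℂ}
    (hM : M.PosSemidef) : ((c : ℂ) • M).PosSemidef := by
  constructor
  · have : ((c:ℂ) • M)ᴴ = star (c:ℂ) • Mᴴ := Matrix.conjTranspose_smul _ _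
    rw [Matrix.IsHermitian, this, hM.1.eq, Complex.star_def, Complex.conj_ofReal]
  · intro x
    exact (hM.smul (Complex.zero_le_real.mpr hc)).2 x

private lemma psd_qpq {d : ℕ} {Pm Qm : Matrix (Fin d) (Fin d) ℂ}
    (hP : Pm.IsHermitian) (hQ : Qm.IsHermitian) (hPidem : Pm * Pm = Pm) :
    (Qm * Pm * Qm).PosSemidef := by
  have h := Matrix.posSemidef_conjTranspose_mul_self (Pm * Qm)
  have he : (Pm * Qm)ᴴ * (Pm * Qm) = Qm * Pm * Qm := by
    rw [Matrix.conjTranspose_mul, hP.eq, hQ.eq, Matrix.mul_assoc Qm Pm,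
      ← Matrix.mul_assoc Pm Pm, hPidem, ← Matrix.mul_assoc]
  rwa [he] at h


/-- The operator `∑_{x,y : λ_x ≥ L μ_y} Q_y P_x Q_y`. -/
noncomputable def opS {d : ℕ} {ι κ : Type*} [Fintype ι] [Fintype κ]
    (lam : ι → ℝ) (mu : κ → ℝ)
    (P : ι → Matrix (Fin d) (Fin d) ℂ) (Q : κ → Matrix (Fin d) (Fin d) ℂ)
    (L : ℝ) : Matrix (Fin d) (Fin d) ℂ :=
  ∑ p ∈ Finset.univ.filter (fun p : ι × κ => L * mu p.2 ≤ lam p.1),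
    Q p.2 * P p.1 * Q p.2

theorem stmt13 {d : ℕ} {ι κ : Type*} [Fintype ι] [Fintype κ]
    (ρ σ : Matrix (Fin d) (Fin d) ℂ)
    (hρ : ρ.PosSemidef) (hρtr : ρ.trace = 1)
    (hσ : σ.PosSemidef) (hσtr : σ.trace = 1)
    (lam : ι → ℝ) (mu : κ → ℝ) (hlam : ∀ x, 0 ≤ lam x) (hmu : ∀ y, 0 ≤ mu y)
    (hlam' : Function.Injective lam) (hmu' : Function.Injective mu)
    (P : ι → Matrix (Fin d) (Fin d) ℂ) (Q : κ → Matrix (Fin d) (Fin d) ℂ)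
    (hPh : ∀ x, (P x).IsHermitian) (hQh : ∀ y, (Q y).IsHermitian)
    (hPo : ∀ x x', x ≠ x' → P x * P x' = 0)
    (hQo : ∀ y y', y ≠ y' → Q y * Q y' = 0)
    (hPi : ∀ x, P x * P x = P x) (hQi : ∀ y, Q y * Q y = Q y)
    (hPsum : ∑ x, P x = 1) (hQsum : ∑ y, Q y = 1)
    (hρP : ρ = ∑ x, (lam x : ℂ) • P x) (hσQ : σ = ∑ y, (mu y : ℂ) • Q y)
    (L : ℝ) (hLpos : 0 < L)
    (T : Matrix (Fin d) (Fin d) ℂ)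
    (hTh : T.IsHermitian) (hTi : T * T = T)
    (hTrange : LinearMap.range T.mulVecLin
      = LinearMap.range (opS lam mu P Q L).mulVecLin) :
    ((T * ρ).trace).re
      ≥ ∑ p ∈ Finset.univ.filter (fun p : ι × κ => L * mu p.2 ≤ lam p.1),
          lam p.1 * ((P p.1 * Q p.2).trace).re := by
  classical
  set F : Finset (ι × κ) := Finset.univ.filter (fun p : ι × κ => L * mu p.2 ≤ lam p.1) with hF
  set S : Matrix (Fin d) (Fin d) ℂ := opS lam mu P Q L with hS
  have hSdef : S = ∑ p ∈ F, Q p.2 * P p.1 * Q p.2 := rfl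
  -- basic PSD facts
  have hQPQ : ∀ (x : ι) (y : κ), (Q y * P x * Q y).PosSemidef :=
    fun x y => psd_qpq (hPh x) (hQh y) (hPi x)
  have hTpsd : T.PosSemidef := by
    have := Matrix.posSemidef_conjTranspose_mul_self T
    rwa [hTh.eq, hTi] at this
  have hSh : S.IsHermitian := by
    rw [Matrix.IsHermitian, hSdef, conjTranspose_sum]
    exact Finset.sum_congr rfl fun p _ => (hQPQ p.1 p.2).1.eq
  -- T fixes range of S
  have hfix : ∀ u : Fin d → ℂ, u ∈ LinearMap.range T.mulVecLin → T *ᵥ u = u := by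
    rintro u ⟨w, rfl⟩
    show T *ᵥ T *ᵥ w = T *ᵥ w
    rw [mulVec_mulVec, hTi]
  have hmemS : ∀ v, S *ᵥ v ∈ LinearMap.range T.mulVecLin := by
    intro v; rw [hTrange]; exact ⟨v, rfl⟩
  have hTmemS : ∀ v, T *ᵥ v ∈ LinearMap.range S.mulVecLin := by
    intro v; rw [← hTrange]; exact ⟨v, rfl⟩
  have hTS : T * S = S := myext fun v => by
    rw [← mulVec_mulVec]; exact hfix _ (hmemS v)
  have hST : S * T = S := by
    have := congrArg conjTranspose hTS
    rwa [conjTranspose_mul, hTh.eq, hSh.eq] at this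
  -- Q commutes with S
  have hQS : ∀ y, Q y * S = S * Q y := by
    intro y
    rw [hSdef, Finset.mul_sum, Finset.sum_mul]
    refine Finset.sum_congr rfl fun p _ => ?_
    by_cases h : p.2 = y
    · rw [h]
      conv_lhs => rw [← mul_assoc, ← mul_assoc, hQi]
      conv_rhs => rw [mul_assoc, hQi]
    · have h1 : Q y * Q p.2 = 0 := hQo y p.2 (fun hh => h hh.symm)
      have h2 : Q p.2 * Q y = 0 := hQo p.2 y h
      conv_lhs => rw [← mul_assoc, ← mul_assoc, h1, zero_mul, zero_mul]
      conv_rhs => rw [mul_assoc, h2, mul_zero]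
  -- T commutes with Q
  have hTQ : ∀ y, T * Q y = Q y * T := by
    intro y
    have key : T * (Q y * T) = Q y * T := myext fun v => by
      obtain ⟨w, hw⟩ := hTmemS v
      have h2 : (Q y * T) *ᵥ v = S *ᵥ (Q y *ᵥ w) := by
        rw [← mulVec_mulVec, ← hw]
        show Q y *ᵥ S *ᵥ w = _
        rw [mulVec_mulVec, mulVec_mulVec, hQS]
      rw [← mulVec_mulVec]
      exact hfix _ (by rw [h2]; exact hmemS _)
    have key2 := congrArg conjTranspose key
    simp only [conjTranspose_mul, hTh.eq, (hQh y).eq] at key2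
    -- key2 : T * Q y * T = T * Q y  (up to assoc)
    rw [← mul_assoc] at key
    rw [← key, key2]
  -- trace computations
  have hterm : ∀ (x : ι) (y : κ),
      (T * (Q y * P x * Q y)).trace = (T * (Q y * P x)).trace := by
    intro x y
    calc (T * (Q y * P x * Q y)).trace
        = (T * Q y * P x * Q y).trace := by
          rw [show T * (Q y * P x * Q y) = T * Q y * P x * Q y by noncomm_ring]
      _ = (Q y * (T * Q y * P x)).trace := by rw [Matrix.trace_mul_comm]
      _ = ((Q y * T) * (Q y * P x)).trace := by
          rw [show Q y * (T * Q y * P x) = (Q y * T) * (Q y * P x) by noncomm_ring]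
      _ = ((T * Q y) * (Q y * P x)).trace := by rw [hTQ y]
      _ = (T * (Q y * Q y * P x)).trace := by
          rw [show (T * Q y) * (Q y * P x) = T * (Q y * Q y * P x) by noncomm_ring]
      _ = (T * (Q y * P x)).trace := by rw [hQi y]
  have hsum_y : ∀ x, ∑ y, (T * (Q y * P x)).trace = (T * P x).trace := by
    intro x
    rw [← Matrix.trace_sum, ← Finset.mul_sum, ← Finset.sum_mul, hQsum, one_mul]
  have hTρ : (T * ρ).trace = ∑ x, (lam x : ℂ) * (T * P x).trace := by
    rw [hρP, Finset.mul_sum, Matrix.trace_sum]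
    simp only [mul_smul_comm, Matrix.trace_smul, smul_eq_mul]
  have hfull : ∑ p : ι × κ, (lam p.1 : ℂ) * (T * (Q p.2 * P p.1 * Q p.2)).trace
      = (T * ρ).trace := by
    rw [hTρ, Fintype.sum_prod_type]
    refine Finset.sum_congr rfl fun x _ => ?_
    show ∑ y, (lam x : ℂ) * (T * (Q y * P x * Q y)).trace = (lam x : ℂ) * (T * P x).trace
    rw [← Finset.mul_sum]
    congr 1
    rw [← hsum_y x]
    exact Finset.sum_congr rfl fun y _ => hterm x y
  set A : Matrix (Fin d) (Fin d) ℂ :=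
    ∑ p ∈ F, (lam p.1 : ℂ) • (Q p.2 * P p.1 * Q p.2) with hA
  have hApsd : A.PosSemidef := by
    rw [hA]
    refine Finset.sum_induction _ _ (fun a b ha hb => ha.add hb) Matrix.PosSemidef.zero
      (fun p _ => smul_psd (hlam p.1) (hQPQ p.1 p.2))
  have hTA : (T * A).trace = ∑ p ∈ F, (lam p.1 : ℂ) * (T * (Q p.2 * P p.1 * Q p.2)).trace := by
    rw [hA, Finset.mul_sum, Matrix.trace_sum]
    simp only [mul_smul_comm, Matrix.trace_smul, smul_eq_mul]
  -- (T*A).trace = A.trace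
  obtain ⟨R, hR⟩ : ∃ R : Matrix (Fin d) (Fin d) ℂ, R = 1 - T := ⟨_, rfl⟩
  have hRh : R.IsHermitian := by rw [hR]; exact Matrix.isHermitian_one.sub hTh
  have hRi : R * R = R := by
    rw [hR]
    simp only [mul_sub, sub_mul, one_mul, mul_one, hTi]
    abel
  have hRS : R * S = 0 := by rw [hR, sub_mul, one_mul, hTS, sub_self]
  set c : ℝ := ∑ x, lam x with hc
  have hcx : ∀ x, lam x ≤ c := fun x =>
    Finset.single_le_sum (fun i _ => hlam i) (Finset.mem_univ x)
  have hD : (c : ℂ) • S - A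
      = ∑ p ∈ F, ((c - lam p.1 : ℝ) : ℂ) • (Q p.2 * P p.1 * Q p.2) := by
    rw [hSdef, hA, Finset.smul_sum, ← Finset.sum_sub_distrib]
    refine Finset.sum_congr rfl fun p _ => ?_
    rw [← sub_smul]
    push_cast
    ring_nf
  have hDpsd : ((c : ℂ) • S - A).PosSemidef := by
    rw [hD]
    exact Finset.sum_induction _ _ (fun a b ha hb => ha.add hb) Matrix.PosSemidef.zero
      (fun p _ => smul_psd (sub_nonneg.2 (hcx p.1)) (hQPQ p.1 p.2))
  have hRAR : (R * A * R).PosSemidef := by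
    have := hApsd.mul_mul_conjTranspose_same R
    rwa [hRh.eq] at this
  have hRDR : (R * ((c : ℂ) • S - A) * R).PosSemidef := by
    have := hDpsd.mul_mul_conjTranspose_same R
    rwa [hRh.eq] at this
  have h0 : R * ((c : ℂ) • S - A) * R = -(R * A * R) := by
    rw [mul_sub, sub_mul, mul_smul_comm, hRS, smul_zero, zero_mul, zero_sub]
  have htr0 : (R * A * R).trace = 0 := by
    have h1 : 0 ≤ (R * A * R).trace := trace_psd_nonneg hRAR
    have h2 : 0 ≤ (-(R * A * R)).trace := trace_psd_nonneg (h0 ▸ hRDR)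
    rw [Matrix.trace_neg] at h2
    exact le_antisymm (neg_nonneg.mp h2) h1
  have hRA : (R * A).trace = 0 := by
    have hh : R * A = R * R * A := by rw [hRi]
    rw [hh, ← Matrix.trace_mul_cycle R A R, htr0]
  have hTAtr : (T * A).trace = A.trace := by
    have hh : (R * A).trace = A.trace - (T * A).trace := by
      rw [hR, sub_mul, one_mul, Matrix.trace_sub]
    rw [hh] at hRA
    exact (sub_eq_zero.mp hRA).symm
  -- nonnegativity of the complement part
  have hBnn : 0 ≤ ∑ p ∈ Finset.univ.filter (fun p : ι × κ => ¬ (L * mu p.2 ≤ lam p.1)),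
      (lam p.1 : ℂ) * (T * (Q p.2 * P p.1 * Q p.2)).trace := by
    refine Finset.sum_nonneg fun p _ => ?_
    exact mul_nonneg (Complex.zero_le_real.mpr (hlam p.1))
      (trace_mul_psd_nonneg hTpsd (hQPQ p.1 p.2))
  have hsplit := Finset.sum_filter_add_sum_filter_not Finset.univ
    (fun p : ι × κ => L * mu p.2 ≤ lam p.1)
    (fun p => (lam p.1 : ℂ) * (T * (Q p.2 * P p.1 * Q p.2)).trace)
  have hmain : A.trace ≤ (T * ρ).trace := by
    calc A.trace = (T * A).trace := hTAtr.symm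
      _ = ∑ p ∈ F, (lam p.1 : ℂ) * (T * (Q p.2 * P p.1 * Q p.2)).trace := hTA
      _ ≤ ∑ p ∈ F, (lam p.1 : ℂ) * (T * (Q p.2 * P p.1 * Q p.2)).trace
          + ∑ p ∈ Finset.univ.filter (fun p : ι × κ => ¬ (L * mu p.2 ≤ lam p.1)),
            (lam p.1 : ℂ) * (T * (Q p.2 * P p.1 * Q p.2)).trace :=
          le_add_of_nonneg_right hBnn
      _ = ∑ p : ι × κ, (lam p.1 : ℂ) * (T * (Q p.2 * P p.1 * Q p.2)).trace := hsplit
      _ = (T * ρ).trace := hfull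
  -- compute A.trace
  have hPQtr : ∀ (x : ι) (y : κ), (Q y * P x * Q y).trace = (P x * Q y).trace := by
    intro x y
    rw [Matrix.trace_mul_cycle, hQi, Matrix.trace_mul_comm]
  have hAtr : A.trace = ∑ p ∈ F, (lam p.1 : ℂ) * (P p.1 * Q p.2).trace := by
    rw [hA, Matrix.trace_sum]
    simp only [Matrix.trace_smul, smul_eq_mul]
    exact Finset.sum_congr rfl fun p _ => by rw [hPQtr]
  have hre : (A.trace).re ≤ ((T * ρ).trace).re := (Complex.le_def.mp hmain).1
  have hAre : (A.trace).re = ∑ p ∈ F, lam p.1 * ((P p.1 * Q p.2).trace).re := by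
    rw [hAtr, Complex.re_sum]
    refine Finset.sum_congr rfl fun p _ => ?_
    simp [Complex.mul_re]
  rw [ge_iff_le, ← hAre]
  exact hre
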